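/- In any rectilinear drawing with all vertices at distinct points, if two vertices u and v have the same x-coordinate and both u and v are flat vertices whose flat angles face each other horizontally (u's flat angle is north-oriented with v above u and v's flat angle is south-oriented), then u lies in the cell of v and v lies in the cell of u; hence the drawing is not greedy. -/

import Mathlib

open Function

noncomputable section

abbrev Plane := EuclideanSpace ℝ (Fin 2)

def IsGreedy {V : Type*} (G : SimpleGraph V) (p : V → Plane) : Prop :=
  ∀ u v : V, u ≠ v → ∃ (n : ℕ) (c : Fin (n + 1) → V), c 0 = u ∧ c (Fin.last n) = v ∧
    (∀ i : Fin n, G.Adj (c i.castSucc) (c i.succ)) ∧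
    (∀ i : Fin n, dist (p (c i.succ)) (p v) < dist (p (c i.castSucc)) (p v))

def cell {V : Type*} (G : SimpleGraph V) (p : V → Plane) (v : V) : Set Plane :=
  {q | ∀ w : V, G.Adj v w → dist q (p v) < dist q (p w)}

def AxisParallel {V : Type*} (G : SimpleGraph V) (p : V → Plane) : Prop :=
  ∀ u v : V, G.Adj u v → p u 0 = p v 0 ∨ p u 1 = p v 1

/-- If two vertices `u` (with a north-oriented flat angle) and `v` above it (with a
south-oriented flat angle) share the same `x`-coordinate, then each lies in the cell
of the other, so the drawing is not greedy. -/

lemma plane_dist_eq (x y : Plane) :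
    dist x y = Real.sqrt ((x 0 - y 0) ^ 2 + (x 1 - y 1) ^ 2) := by
  rw [EuclideanSpace.dist_eq, Fin.sum_univ_two]
  simp [Real.dist_eq, sq_abs]

lemma plane_dist_lt (x y z : Plane)
    (h : (x 0 - y 0) ^ 2 + (x 1 - y 1) ^ 2 < (x 0 - z 0) ^ 2 + (x 1 - z 1) ^ 2) :
    dist x y < dist x z := by
  rw [plane_dist_eq, plane_dist_eq]
  exact Real.sqrt_lt_sqrt (by positivity) h

lemma plane_ext {x y : Plane} (h0 : x 0 = y 0) (h1 : x 1 = y 1) : x = y := by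
  ext i
  fin_cases i <;> assumption

theorem facing_flat_vertices_not_greedy {V : Type*} [Fintype V]
    (G : SimpleGraph V) (p : V → Plane) (hp : Injective p)
    (haxis : AxisParallel G p) (u v : V)
    (hx : p u 0 = p v 0) (hy : p u 1 < p v 1)
    -- `u` is a flat vertex, its flat angle is north-oriented:
    -- two horizontal incident segments and no neighbor strictly above
    (huflat : ∃ wl wr : V, G.Adj u wl ∧ G.Adj u wr ∧
      p wl 1 = p u 1 ∧ p wr 1 = p u 1 ∧ p wl 0 < p u 0 ∧ p u 0 < p wr 0)
    (hunorth : ∀ w : V, G.Adj u w → p w 1 ≤ p u 1)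
    -- `v` is a flat vertex, its flat angle is south-oriented
    (hvflat : ∃ wl wr : V, G.Adj v wl ∧ G.Adj v wr ∧
      p wl 1 = p v 1 ∧ p wr 1 = p v 1 ∧ p wl 0 < p v 0 ∧ p v 0 < p wr 0)
    (hvsouth : ∀ w : V, G.Adj v w → p v 1 ≤ p w 1) :
    p u ∈ cell G p v ∧ p v ∈ cell G p u ∧ ¬ IsGreedy G p := by
  have huv : u ≠ v := fun h => absurd hy (by rw [h]; exact lt_irrefl _)
  have hucell : p u ∈ cell G p v := by
    intro w hw
    have hne : p w ≠ p v := fun h => G.irrefl (hp h ▸ hw)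
    have hle := hvsouth w hw
    rcases haxis v w hw with h | h
    · have h1 : p v 1 < p w 1 :=
        lt_of_le_of_ne hle (fun h1 => hne (plane_ext h.symm h1.symm))
      apply plane_dist_lt
      nlinarith [sq_nonneg (p u 0 - p w 0), sq_nonneg (p u 1 - p v 1)]
    · have h0 : p w 0 ≠ p v 0 := fun h0 => hne (plane_ext h0 h.symm)
      have := pow_pos (abs_pos.mpr (sub_ne_zero.mpr h0)) 2
      apply plane_dist_lt
      rw [hx, ← h]
      nlinarith [sq_abs (p w 0 - p v 0)]
  have hvcell : p v ∈ cell G p u := by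
    intro w hw
    have hne : p w ≠ p u := fun h => G.irrefl (hp h ▸ hw)
    have hle := hunorth w hw
    rcases haxis u w hw with h | h
    · have h1 : p w 1 < p u 1 :=
        lt_of_le_of_ne hle (fun h1 => hne (plane_ext h.symm h1))
      apply plane_dist_lt
      nlinarith [sq_nonneg (p v 0 - p w 0), sq_nonneg (p v 1 - p u 1)]
    · have h0 : p w 0 ≠ p u 0 := fun h0 => hne (plane_ext h0 h.symm)
      have := pow_pos (abs_pos.mpr (sub_ne_zero.mpr h0)) 2
      apply plane_dist_lt
      rw [← hx, ← h]
      nlinarith [sq_abs (p w 0 - p u 0)]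
  refine ⟨hucell, hvcell, ?_⟩
  intro hg
  obtain ⟨n, c, h0, hl, hadj, hdist⟩ := hg v u huv.symm
  match n, c, h0, hl, hadj, hdist with
  | 0, c, h0, hl, hadj, hdist =>
    exact huv (hl ▸ h0 ▸ rfl)
  | (m+1), c, h0, hl, hadj, hdist =>
    have hadj0 := hadj 0
    have hdist0 := hdist 0
    rw [show (0 : Fin (m+1)).castSucc = 0 from rfl, h0] at hadj0 hdist0
    have := hucell _ hadj0
    rw [dist_comm (p u) (p v), dist_comm (p u)] at this
    exact absurd hdist0 (not_lt.mpr this.le)
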